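/- Let A and B be categories, Φ : A ⥤ B a functor, F : [1] ⥤ Cat the functor with F(0) = A and F(1) = B sending the arrow 0 ≤ 1 to Φ, and p : ∫F ⥤ [1] the projection from the Grothendieck construction of F. Then the category whose objects are functors G : sd(1) ⥤ ∫F satisfying G ⋙ p = max and sending the inclusion {0} ⊆ {0,1} to a p-cocartesian morphism, and whose morphisms are natural transformations whose image under p is the identity, is equivalent to the comma category Comma (𝟭 B) Φ, whose objects are triples (b ∈ B, a ∈ A, f : b ⟶ Φ a) and whose morphisms are compatible pairs of morphisms in B and A. -/

import Mathlib

open CategoryTheory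

universe v u

/-- The subdivision `sd([1])`: the poset of nonempty subsets of `Fin 2`,
namely `{0}, {1}, {0,1}`, ordered by inclusion. -/
abbrev Sd1 := {S : Finset (Fin 2) // S.Nonempty}

/-- The functor `max : sd([1]) ⥤ [1]` sending a nonempty subset to its maximum. -/
def sdMax : Sd1 ⥤ Fin 2 where
  obj S := S.1.max' S.2
  map {S T} f := homOfLE (Finset.max'_subset S.2 (leOfHom f))
  map_id _ := rfl
  map_comp _ _ := rfl

/-- The object `{0}` of `sd([1])`. -/
def sd0 : Sd1 := ⟨{0}, Finset.singleton_nonempty 0⟩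

/-- The object `{0, 1}` of `sd([1])`. -/
def sd01 : Sd1 := ⟨{0, 1}, Finset.insert_nonempty 0 {1}⟩

/-- The inclusion `{0} ⊆ {0, 1}` in `sd([1])`. -/
def sdIota : sd0 ⟶ sd01 :=
  homOfLE (by exact Finset.singleton_subset_iff.2 (Finset.mem_insert_self 0 {1}))

open CategoryTheory.Limits

namespace RlaxAux

def sd1 : Sd1 := ⟨{1}, Finset.singleton_nonempty 1⟩
def sdJ1 : sd1 ⟶ sd01 := homOfLE (by decide)

lemma sd_cases (S : Sd1) : S = sd0 ∨ S = sd1 ∨ S = sd01 := by revert S; decide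

instance : DecidableEq WalkingCospan :=
  show DecidableEq (Option WalkingPair) from inferInstance

instance (S T : Sd1) : Subsingleton (S ⟶ T) :=
  show Subsingleton (ULift (PLift _)) from inferInstance

instance (i j : Fin 2) : Subsingleton (i ⟶ j) :=
  show Subsingleton (ULift (PLift _)) from inferInstance

def uObj (S : Sd1) : WalkingCospan :=
  if (0:Fin 2) ∈ S.1 then (if (1:Fin 2) ∈ S.1 then .one else .left) else .right

lemma uObj_one {S T : Sd1} (f : S ⟶ T) (h : uObj S ≠ uObj T) : uObj T = .one := by
  revert h; revert f
  have : ∀ S T : Sd1, S.1 ⊆ T.1 → uObj S ≠ uObj T → uObj T = .one := by decide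
  intro f; exact this S T (leOfHom f)

def uHom : ∀ (W W' : WalkingCospan), W' = .one → (W ⟶ W')
  | none, _, h => eqToHom h.symm
  | some j, _, h => h ▸ WidePullbackShape.Hom.term j

def u : Sd1 ⥤ WalkingCospan where
  obj := uObj
  map {S T} f := if h : uObj S = uObj T then eqToHom h else uHom _ _ (uObj_one f h)
  map_id _ := Subsingleton.elim _ _
  map_comp _ _ := Subsingleton.elim _ _

lemma u_map_iota : u.map sdIota = WalkingCospan.Hom.inl := Subsingleton.elim _ _
lemma u_map_j1 : u.map sdJ1 = WalkingCospan.Hom.inr := Subsingleton.elim _ _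

section
variable {A B : Cat.{v, u}} {Φ : A ⟶ B}

abbrev Ff (Φ : A ⟶ B) : Fin 2 ⥤ Cat.{v,u} := ComposableArrows.mk₁ Φ

def obj0 (Φ : A ⟶ B) (a : A) : Grothendieck (Ff Φ) := ⟨0, a⟩
def obj1 (Φ : A ⟶ B) (b : B) : Grothendieck (Ff Φ) := ⟨1, b⟩

def hom01 : (0 : Fin 2) ⟶ 1 := homOfLE (by decide)

def mc0 (a : A) : (obj0 Φ a) ⟶ obj1 Φ (Φ.toFunctor.obj a) := ⟨hom01, 𝟙 (Φ.toFunctor.obj a)⟩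
def mc1 {b b' : B} (f : b ⟶ b') : (obj1 Φ b) ⟶ obj1 Φ b' := ⟨𝟙 1, f⟩
def mc00 {a a' : A} (f : a ⟶ a') : (obj0 Φ a) ⟶ obj0 Φ a' := ⟨𝟙 0, f⟩

@[simp] lemma mc1_fiber {b b' : B} (f : b ⟶ b') : (mc1 (Φ := Φ) f).fiber = f := rfl
@[simp] lemma mc00_fiber {a a' : A} (f : a ⟶ a') : (mc00 (Φ := Φ) f).fiber = f := rfl

lemma mc1_id (b : B) : mc1 (Φ := Φ) (𝟙 b) = 𝟙 (obj1 Φ b) := by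
  refine Grothendieck.ext _ _ rfl ?_
  show 𝟙 b ≫ 𝟙 b = 𝟙 b
  simp

lemma mc1_comp {b b' b'' : B} (f : b ⟶ b') (g : b' ⟶ b'') :
    mc1 (Φ := Φ) (f ≫ g) = mc1 f ≫ mc1 g := by
  refine Grothendieck.ext _ _ rfl ?_
  show 𝟙 _ ≫ f ≫ g = 𝟙 _ ≫ (𝟭 B).map f ≫ g
  simp

lemma mc00_id (a : A) : mc00 (Φ := Φ) (𝟙 a) = 𝟙 (obj0 Φ a) := by
  refine Grothendieck.ext _ _ rfl ?_
  show 𝟙 a ≫ 𝟙 a = 𝟙 a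
  simp

lemma mc00_comp {a a' a'' : A} (f : a ⟶ a') (g : a' ⟶ a'') :
    mc00 (Φ := Φ) (f ≫ g) = mc00 f ≫ mc00 g := by
  refine Grothendieck.ext _ _ rfl ?_
  show 𝟙 _ ≫ f ≫ g = 𝟙 _ ≫ (𝟭 A).map f ≫ g
  simp

lemma sq0 {a a' : A} (r : a ⟶ a') :
    mc0 (Φ := Φ) a ≫ mc1 (Φ.toFunctor.map r) = mc00 r ≫ mc0 a' := by
  refine Grothendieck.ext _ _ rfl ?_
  show 𝟙 _ ≫ (𝟙 _ ≫ (𝟭 ↥B).map (𝟙 (Φ.toFunctor.obj a)) ≫ Φ.toFunctor.map r) = 𝟙 _ ≫ Φ.toFunctor.map r ≫ 𝟙 _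
  simp

def gx (X : Comma (𝟭 ↥B) Φ.toFunctor) : Sd1 ⥤ Grothendieck (Ff Φ) :=
  u ⋙ cospan (mc0 X.right) (mc1 X.hom)

lemma gx_map_iota (X : Comma (𝟭 ↥B) Φ.toFunctor) : (gx X).map sdIota = mc0 X.right := by
  show (cospan (mc0 X.right) (mc1 X.hom)).map (u.map sdIota) = mc0 X.right
  rw [u_map_iota]; exact cospan_map_inl _ _

lemma gx_map_j1 (X : Comma (𝟭 ↥B) Φ.toFunctor) : (gx X).map sdJ1 = mc1 X.hom := by
  show (cospan (mc0 X.right) (mc1 X.hom)).map (u.map sdJ1) = mc1 X.hom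
  rw [u_map_j1]; exact cospan_map_inr _ _

lemma gx_pred (X : Comma (𝟭 ↥B) Φ.toFunctor) :
    (gx X) ⋙ Grothendieck.forget _ = sdMax ∧ IsIso ((gx X).map sdIota).fiber := by
  constructor
  · refine CategoryTheory.Functor.ext (fun S => ?_) (fun S T f => Subsingleton.elim _ _)
    rcases sd_cases S with rfl | rfl | rfl <;> rfl
  · rw [gx_map_iota]
    exact inferInstanceAs (IsIso (𝟙 _))

def cnat {X Y : Comma (𝟭 ↥B) Φ.toFunctor} (φ : X ⟶ Y) :
    cospan (mc0 X.right) (mc1 X.hom) ⟶ cospan (mc0 Y.right) (mc1 Y.hom) where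
  app W := match W with
    | .left => mc00 φ.right
    | .right => mc1 φ.left
    | .none => mc1 (Φ.toFunctor.map φ.right)
  naturality := by
    rintro _ _ (_ | j)
    · simp
    · cases j
      · exact sq0 φ.right
      · show mc1 _ ≫ mc1 _ = mc1 _ ≫ mc1 _
        rw [← mc1_comp, ← mc1_comp, ← φ.w]
        rfl

def rcore : Comma (𝟭 ↥B) Φ.toFunctor ⥤ (Sd1 ⥤ Grothendieck (Ff Φ)) where
  obj X := gx X
  map φ := Functor.whiskerLeft u (cnat φ)
  map_id X := by
    ext S
    rcases sd_cases S with rfl | rfl | rfl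
    · exact mc00_id _
    · exact mc1_id _
    · show mc1 (Φ.toFunctor.map (𝟙 X.right)) = _
      rw [CategoryTheory.Functor.map_id]
      exact mc1_id _
  map_comp {X Y Z} φ ψ := by
    ext S
    rcases sd_cases S with rfl | rfl | rfl
    · exact mc00_comp _ _
    · exact mc1_comp _ _
    · show mc1 (Φ.toFunctor.map ((φ ≫ ψ).right)) = _
      rw [Comma.comp_right, CategoryTheory.Functor.map_comp]
      exact mc1_comp _ _


lemma hom_fiber_congr {X Y : Grothendieck (Ff Φ)} {f g : X ⟶ Y} (h : f = g) :
    HEq f.fiber g.fiber := by subst h; rfl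

abbrev Pred (Φ : A ⟶ B) : (Sd1 ⥤ Grothendieck (ComposableArrows.mk₁ Φ)) → Prop :=
  fun G => G ⋙ Grothendieck.forget _ = sdMax ∧ IsIso (G.map sdIota).fiber

def rfun : Comma (𝟭 ↥B) Φ.toFunctor ⥤ ObjectProperty.FullSubcategory (Pred Φ) :=
  ObjectProperty.lift _ rcore gx_pred

instance : (rfun (Φ := Φ)).Faithful where
  map_injective := by
    intro X Y φ ψ h
    have h' : (Functor.whiskerLeft u (cnat φ) : gx X ⟶ gx Y) = Functor.whiskerLeft u (cnat ψ) :=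
      congrArg (fun k => k.hom) h
    have h1 : mc1 (Φ := Φ) φ.left = mc1 ψ.left := congrArg (fun η : gx X ⟶ gx Y => η.app sd1) h'
    have h0 : mc00 (Φ := Φ) φ.right = mc00 ψ.right :=
      congrArg (fun η : gx X ⟶ gx Y => η.app sd0) h'
    have hl : φ.left = ψ.left := eq_of_heq (hom_fiber_congr h1)
    have hr : φ.right = ψ.right := eq_of_heq (hom_fiber_congr h0)
    apply CommaMorphism.ext <;> assumption

instance : (rfun (Φ := Φ)).Full where
  map_surjective := by
    intro X Y η
    let θ : gx X ⟶ gx Y := η.hom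
    have nat1 : mc1 X.hom ≫ θ.app sd01 = θ.app sd1 ≫ mc1 Y.hom := by
      have := θ.naturality sdJ1
      rwa [gx_map_j1 X, gx_map_j1 Y] at this
    have nat2 : mc0 X.right ≫ θ.app sd01 = θ.app sd0 ≫ mc0 Y.right := by
      have := θ.naturality sdIota
      rwa [gx_map_iota X, gx_map_iota Y] at this
    have clean1 : 𝟙 _ ≫ (𝟭 ↥B).map X.hom ≫ (θ.app sd01).fiber
        = 𝟙 _ ≫ (𝟭 ↥B).map ((θ.app sd1).fiber) ≫ Y.hom := eq_of_heq (hom_fiber_congr nat1)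
    have clean2 : 𝟙 _ ≫ (𝟭 ↥B).map (𝟙 (Φ.toFunctor.obj X.right)) ≫ (θ.app sd01).fiber
        = 𝟙 _ ≫ Φ.toFunctor.map ((θ.app sd0).fiber) ≫ 𝟙 _ := eq_of_heq (hom_fiber_congr nat2)
    have c1 : X.hom ≫ (θ.app sd01).fiber = (θ.app sd1).fiber ≫ Y.hom :=
      (Category.id_comp _).symm.trans (clean1.trans (Category.id_comp _))
    have c2 : (θ.app sd01).fiber = Φ.toFunctor.map ((θ.app sd0).fiber) :=
      (Category.id_comp _).symm.trans ((Category.id_comp _).symm.trans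
        (clean2.trans ((Category.id_comp _).trans (Category.comp_id _))))
    refine ⟨⟨(θ.app sd1).fiber, (θ.app sd0).fiber, ?_⟩, ?_⟩
    · show (𝟭 ↥B).map _ ≫ Y.hom = X.hom ≫ Φ.toFunctor.map _
      exact c1.symm.trans (congrArg (fun t : Φ.toFunctor.obj X.right ⟶ Φ.toFunctor.obj Y.right => X.hom ≫ t) c2)
    · refine ObjectProperty.hom_ext (P := Pred Φ) ?_
      show (Functor.whiskerLeft u (cnat _) : gx X ⟶ gx Y) = θ
      refine NatTrans.ext (funext fun S => ?_)
      rcases sd_cases S with rfl | rfl | rfl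
      · show mc00 (Φ := Φ) ((θ.app sd0).fiber) = θ.app sd0
        refine Grothendieck.ext _ _ rfl ?_
        show 𝟙 _ ≫ (θ.app sd0).fiber = (θ.app sd0).fiber
        simp
      · show mc1 (Φ := Φ) ((θ.app sd1).fiber) = θ.app sd1
        refine Grothendieck.ext _ _ rfl ?_
        show 𝟙 _ ≫ (θ.app sd1).fiber = (θ.app sd1).fiber
        simp
      · show mc1 (Φ := Φ) (Φ.toFunctor.map ((θ.app sd0).fiber)) = θ.app sd01
        refine Grothendieck.ext _ _ rfl ?_
        show 𝟙 _ ≫ Φ.toFunctor.map ((θ.app sd0).fiber) = (θ.app sd01).fiber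
        rw [c2]
        simp

lemma split0 (Z : Grothendieck (Ff Φ)) (h : Z.base = 0) : ∃ x : A, Z = obj0 Φ x := by
  obtain ⟨bz, fz⟩ := Z
  dsimp at h; subst h
  exact ⟨fz, rfl⟩

lemma split1 (Z : Grothendieck (Ff Φ)) (h : Z.base = 1) : ∃ x : B, Z = obj1 Φ x := by
  obtain ⟨bz, fz⟩ := Z
  dsimp at h; subst h
  exact ⟨fz, rfl⟩

section
variable (G : Sd1 ⥤ Grothendieck (Ff Φ)) {x0 : A} {x1 x01 : B}

def psi (e0 : G.obj sd0 = obj0 Φ x0) (e01 : G.obj sd01 = obj1 Φ x01) :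
    obj0 Φ x0 ⟶ obj1 Φ x01 := eqToHom e0.symm ≫ G.map sdIota ≫ eqToHom e01

def fone (e1 : G.obj sd1 = obj1 Φ x1) (e01 : G.obj sd01 = obj1 Φ x01) :
    obj1 Φ x1 ⟶ obj1 Φ x01 := eqToHom e1.symm ≫ G.map sdJ1 ≫ eqToHom e01

variable (e0 : G.obj sd0 = obj0 Φ x0) (e1 : G.obj sd1 = obj1 Φ x1)
  (e01 : G.obj sd01 = obj1 Φ x01)

lemma isIso_psi_fiber (h : IsIso (G.map sdIota).fiber) : IsIso (psi G e0 e01).fiber := by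
  have l1 : ∀ {Z W W' : Grothendieck (Ff Φ)} (e : W = W') (k : Z ⟶ W), IsIso k.fiber →
      IsIso ((k ≫ eqToHom e).fiber) := by
    intro Z W W' e k hk
    subst e
    have : k ≫ eqToHom rfl = k := by simp
    rw [this]; exact hk
  have l2 : ∀ {Z' Z W : Grothendieck (Ff Φ)} (e : Z' = Z) (k : Z ⟶ W), IsIso k.fiber →
      IsIso ((eqToHom e ≫ k).fiber) := by
    intro Z' Z W e k hk
    subst e
    have : eqToHom rfl ≫ k = k := by simp
    rw [this]; exact hk
  show IsIso ((eqToHom e0.symm ≫ G.map sdIota ≫ eqToHom e01).fiber)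
  exact l2 _ _ (l1 _ _ h)

noncomputable def xrec [IsIso (psi G e0 e01).fiber] : Comma (𝟭 ↥B) Φ.toFunctor :=
  ⟨x1, x0, (fone G e1 e01).fiber ≫ @inv _ _ _ _ (psi G e0 e01).fiber ‹_›⟩

@[simp] lemma xrec_right [IsIso (psi G e0 e01).fiber] : (xrec G e0 e1 e01).right = x0 := rfl
@[simp] lemma xrec_left [IsIso (psi G e0 e01).fiber] : (xrec G e0 e1 e01).left = x1 := rfl
@[simp] lemma xrec_hom [IsIso (psi G e0 e01).fiber] :
    (xrec G e0 e1 e01).hom = (fone G e1 e01).fiber ≫ @inv _ _ _ _ (psi G e0 e01).fiber ‹_› := rfl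

lemma isIso_mc1 {b b' : B} (f : b ⟶ b') [IsIso f] : IsIso (mc1 (Φ := Φ) f) :=
  ⟨⟨mc1 (inv f), by rw [← mc1_comp, IsIso.hom_inv_id, mc1_id],
    by rw [← mc1_comp, IsIso.inv_hom_id, mc1_id]⟩⟩

lemma recObjEq [IsIso (psi G e0 e01).fiber] (S : Sd1) (h : S ≠ sd01) :
    (gx (xrec G e0 e1 e01)).obj S = G.obj S := by
  rcases sd_cases S with rfl | rfl | rfl
  · exact e0.symm
  · exact e1.symm
  · exact absurd rfl h

noncomputable def recApp [IsIso (psi G e0 e01).fiber] (S : Sd1) :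
    (gx (xrec G e0 e1 e01)).obj S ⟶ G.obj S :=
  if h : S = sd01 then
    eqToHom (congrArg (gx (xrec G e0 e1 e01)).obj h) ≫
      (mc1 (psi G e0 e01).fiber ≫ eqToHom e01.symm) ≫ eqToHom (congrArg G.obj h.symm)
  else eqToHom (recObjEq G e0 e1 e01 S h)

lemma recApp_sd01 [IsIso (psi G e0 e01).fiber] :
    recApp G e0 e1 e01 sd01 = mc1 (psi G e0 e01).fiber ≫ eqToHom e01.symm := by
  simp only [recApp]
  simp
  rfl

lemma recApp_ne [IsIso (psi G e0 e01).fiber] (S : Sd1) (h : S ≠ sd01) :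
    recApp G e0 e1 e01 S = eqToHom (recObjEq G e0 e1 e01 S h) := by
  simp only [recApp]
  rw [dif_neg h]

lemma isIso_recApp [IsIso (psi G e0 e01).fiber] (S : Sd1) : IsIso (recApp G e0 e1 e01 S) := by
  simp only [recApp]
  split
  · haveI := @isIso_mc1 A B Φ _ _ (psi G e0 e01).fiber ‹_›
    exact IsIso.comp_isIso' (by infer_instance)
      (IsIso.comp_isIso' (IsIso.comp_isIso' this (Iso.isIso_hom (eqToIso e01.symm))) (by infer_instance))
  · infer_instance

lemma mc1_fone :
    mc1 (Φ := Φ) (fone G e1 e01).fiber = fone G e1 e01 := by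
  refine Grothendieck.ext _ _ rfl ?_
  show 𝟙 _ ≫ (fone G e1 e01).fiber = (fone G e1 e01).fiber
  simp

lemma mc0_psi :
    mc0 x0 ≫ mc1 (Φ := Φ) (psi G e0 e01).fiber = psi G e0 e01 := by
  refine Grothendieck.ext _ _ rfl ?_
  show 𝟙 _ ≫ 𝟙 _ ≫ (𝟭 ↥B).map (𝟙 (Φ.toFunctor.obj x0)) ≫ (psi G e0 e01).fiber = (psi G e0 e01).fiber
  simp
  exact (Category.id_comp _).trans ((Category.id_comp _).trans (Category.id_comp _))

lemma assoc_eqToHom_cancel {C : Type*} [Category C] {W X Y Z : C} (a : W ⟶ X) (b : X ⟶ Y)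
    (e : Y = Z) (e' : Z = Y) : (a ≫ b ≫ eqToHom e) ≫ eqToHom e' = a ≫ b := by
  subst e; simp

noncomputable def recIso [IsIso (psi G e0 e01).fiber] : gx (xrec G e0 e1 e01) ≅ G := by
  haveI := isIso_recApp G e0 e1 e01
  refine NatIso.ofComponents (fun S => asIso (recApp G e0 e1 e01 S)) ?_
  intro S T f
  have hST := leOfHom f
  rcases sd_cases S with rfl | rfl | rfl <;> rcases sd_cases T with rfl | rfl | rfl
  · obtain rfl : f = 𝟙 _ := Subsingleton.elim _ _
    simp [CategoryTheory.Functor.map_id]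
  · exact absurd hST (by decide)
  · -- sd0 ⟶ sd01
    obtain rfl : f = sdIota := Subsingleton.elim _ _
    show (gx (xrec G e0 e1 e01)).map sdIota ≫ recApp G e0 e1 e01 sd01
        = recApp G e0 e1 e01 sd0 ≫ G.map sdIota
    rw [gx_map_iota, recApp_sd01, recApp_ne G e0 e1 e01 sd0 (by decide)]
    simp only [xrec_right]
    erw [← Category.assoc, mc0_psi]
    simp only [psi, Category.assoc, eqToHom_trans, eqToHom_refl, Category.comp_id]
    exact assoc_eqToHom_cancel _ _ _ _
  · exact absurd hST (by decide)
  · obtain rfl : f = 𝟙 _ := Subsingleton.elim _ _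
    simp [CategoryTheory.Functor.map_id]
  · -- sd1 ⟶ sd01
    obtain rfl : f = sdJ1 := Subsingleton.elim _ _
    show (gx (xrec G e0 e1 e01)).map sdJ1 ≫ recApp G e0 e1 e01 sd01
        = recApp G e0 e1 e01 sd1 ≫ G.map sdJ1
    rw [gx_map_j1, recApp_sd01, recApp_ne G e0 e1 e01 sd1 (by decide)]
    simp only [xrec_hom]
    erw [← Category.assoc, ← mc1_comp, Category.assoc, IsIso.inv_hom_id, Category.comp_id,
      mc1_fone]
    simp only [fone, Category.assoc, eqToHom_trans, eqToHom_refl, Category.comp_id]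
    exact assoc_eqToHom_cancel _ _ _ _
  · exact absurd hST (by decide)
  · exact absurd hST (by decide)
  · obtain rfl : f = 𝟙 _ := Subsingleton.elim _ _
    simp [CategoryTheory.Functor.map_id]

end

instance : (rfun (Φ := Φ)).EssSurj where
  mem_essImage := by
    rintro ⟨G, hG, hiso⟩
    obtain ⟨x0, e0⟩ := split0 (G.obj sd0) (Functor.congr_obj hG sd0)
    obtain ⟨x1, e1⟩ := split1 (G.obj sd1) (Functor.congr_obj hG sd1)
    obtain ⟨x01, e01⟩ := split1 (G.obj sd01) (Functor.congr_obj hG sd01)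
    haveI := isIso_psi_fiber G e0 e01 hiso
    refine ⟨xrec G e0 e1 e01, ⟨?_⟩⟩
    have ni : gx (xrec G e0 e1 e01) ≅ G := recIso G e0 e1 e01
    exact ObjectProperty.isoMk (e := ni)

end
end RlaxAux
/-- For a functor `Φ : A ⥤ B`, classified by the functor `F : [1] ⥤ Cat` with `F(0) = A`,
`F(1) = B`, the category of functors `G : sd([1]) ⥤ ∫F` lying over `max : sd([1]) ⥤ [1]`
and sending the inclusion `{0} ⊆ {0,1}` to a cocartesian morphism (i.e. one whose fiber
component is an isomorphism) — with morphisms the natural transformations projecting to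
identities — is equivalent to the comma category of triples `(b, a, f : b ⟶ Φ a)`. -/
theorem rlaxLimit_over_interval_equiv_comma (A B : Cat.{v, u}) (Φ : A ⟶ B) :
    Nonempty
      (ObjectProperty.FullSubcategory
          (fun G : Sd1 ⥤ Grothendieck (ComposableArrows.mk₁ Φ) =>
            G ⋙ Grothendieck.forget _ = sdMax ∧ IsIso (G.map sdIota).fiber) ≌
        Comma (𝟭 ↥B) Φ.toFunctor) := by
  have : (RlaxAux.rfun (Φ := Φ)).IsEquivalence := ⟨inferInstance, inferInstance, inferInstance⟩
  exact ⟨(RlaxAux.rfun (Φ := Φ)).asEquivalence.symm⟩
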